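/- For every positive integer $k$, $\sum_{n=1}^{\infty} (-1)^{n-1}\frac{L_n(1)}{n+k} = (-1)^{k-1}\left( \frac{\zeta(2) - \ln^2 2}{2} - \sum_{i=1}^{k-1} (-1)^{i-1}\frac{H_i}{i} \right)$. -/
import Mathlib

open Filter

noncomputable def H (n : ℕ) : ℝ := ∑ j ∈ Finset.Icc 1 n, (1 : ℝ) / j

noncomputable def La (m n : ℕ) : ℝ := ∑ j ∈ Finset.Icc 1 n, (-1 : ℝ) ^ (j - 1) / (j : ℝ) ^ m

lemma La_one (n : ℕ) : La 1 n = ∑ i ∈ Finset.range n, (-1 : ℝ) ^ i / ((i : ℝ) + 1) := by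
  rw [La, ← Finset.Ico_add_one_right_eq_Icc, Finset.sum_Ico_eq_sum_range]
  apply Finset.sum_congr (by norm_num)
  intro i _
  simp only [Nat.add_sub_cancel_left, pow_one, Nat.cast_add, Nat.cast_one]
  ring_nf

lemma La_succ (n : ℕ) : La 1 (n + 1) = La 1 n + (-1 : ℝ) ^ n / ((n : ℝ) + 1) := by
  rw [La_one, La_one, Finset.sum_range_succ]

lemma H_range (n : ℕ) : H n = ∑ i ∈ Finset.range n, (1 : ℝ) / ((i : ℝ) + 1) := by
  rw [H, ← Finset.Ico_add_one_right_eq_Icc, Finset.sum_Ico_eq_sum_range]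
  apply Finset.sum_congr (by norm_num)
  intro i _
  push_cast
  ring_nf

lemma neg_one_sq_pow (n : ℕ) : (-1 : ℝ) ^ n * (-1) ^ n = 1 := by
  rw [← pow_add]
  exact Even.neg_one_pow ⟨n, rfl⟩

lemma sq_identity (N : ℕ) :
    ∑ n ∈ Finset.range N, (-1 : ℝ) ^ n * La 1 (n + 1) / ((n : ℝ) + 1) =
      ((La 1 N) ^ 2 + ∑ n ∈ Finset.range N, 1 / ((n : ℝ) + 1) ^ 2) / 2 := by
  induction N with
  | zero => simp [La_one]
  | succ N ih =>
    rw [Finset.sum_range_succ, Finset.sum_range_succ, ih, La_succ]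
    have hc : ((N : ℝ) + 1) ≠ 0 := by positivity
    rcases Nat.even_or_odd N with h | h
    · rw [h.neg_one_pow]; field_simp; ring
    · rw [h.neg_one_pow]; field_simp; ring

lemma recursion (k N : ℕ) :
    (∑ n ∈ Finset.range N, (-1 : ℝ) ^ n * La 1 (n + 1) / ((n : ℝ) + 1 + k)) +
      (∑ n ∈ Finset.range N, (-1 : ℝ) ^ n * La 1 (n + 1) / ((n : ℝ) + 1 + (k + 1))) =
      (∑ n ∈ Finset.range N, 1 / (((n : ℝ) + 1) * ((n : ℝ) + 1 + k))) +
        (-1 : ℝ) ^ (N + 1) * La 1 N / ((N : ℝ) + 1 + k) := by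
  induction N with
  | zero => simp [La_one]
  | succ N ih =>
    rw [Finset.sum_range_succ, Finset.sum_range_succ, Finset.sum_range_succ]
    have hc : ((N : ℝ) + 1) ≠ 0 := by positivity
    have hck : ((N : ℝ) + 1 + k) ≠ 0 := by positivity
    have hck2 : ((N : ℝ) + 1 + 1 + k) ≠ 0 := by positivity
    have hL := La_succ N
    push_cast
    rw [show ((N : ℝ) + 1 + 1 + k) = (N : ℝ) + 1 + (k + 1) by ring] at hck2 ⊢
    calc _ = ((∑ n ∈ Finset.range N, (-1 : ℝ) ^ n * La 1 (n + 1) / ((n : ℝ) + 1 + k)) +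
          (∑ n ∈ Finset.range N, (-1 : ℝ) ^ n * La 1 (n + 1) / ((n : ℝ) + 1 + (k + 1)))) +
          ((-1 : ℝ) ^ N * La 1 (N + 1) / ((N : ℝ) + 1 + k) +
            (-1 : ℝ) ^ N * La 1 (N + 1) / ((N : ℝ) + 1 + (k + 1))) := by ring
      _ = _ := by
          rw [ih, hL, pow_succ, pow_succ, pow_succ]
          rcases Nat.even_or_odd N with h | h
          · rw [h.neg_one_pow]; field_simp; ring
          · rw [h.neg_one_pow]; field_simp; ring

open Real in
lemma basel_tendsto :
    Tendsto (fun N => ∑ n ∈ Finset.range N, 1 / ((n : ℝ) + 1) ^ 2) atTop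
      (nhds (π ^ 2 / 6)) := by
  have h := hasSum_zeta_two.tendsto_sum_nat.comp (tendsto_add_atTop_nat 1)
  apply h.congr
  intro N
  simp only [Function.comp_apply, Finset.sum_range_succ']
  norm_num

lemma H_eq_harmonic (n : ℕ) : H n = (harmonic n : ℝ) := by
  rw [H_range, harmonic]
  push_cast
  apply Finset.sum_congr rfl
  intro i _
  rw [one_div]

lemma La_even (N : ℕ) : La 1 (2 * N) = H (2 * N) - H N := by
  induction N with
  | zero => simp [La_one, H_range]
  | succ N ih =>
    rw [show 2 * (N + 1) = 2 * N + 1 + 1 by ring, La_succ, La_succ, ih]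
    have e1 : (-1 : ℝ) ^ (2 * N) = 1 := Even.neg_one_pow ⟨N, by ring⟩
    have e2 : (-1 : ℝ) ^ (2 * N + 1) = -1 := Odd.neg_one_pow ⟨N, by ring⟩
    have hH2 : H (2 * N + 1 + 1) = H (2 * N) + 1 / (((2 * N : ℕ) : ℝ) + 1)
        + 1 / (((2 * N + 1 : ℕ) : ℝ) + 1) := by
      rw [H_range, H_range, Finset.sum_range_succ, Finset.sum_range_succ]
    have hH1 : H (N + 1) = H N + 1 / ((N : ℝ) + 1) := by
      rw [H_range, H_range, Finset.sum_range_succ]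
    rw [e1, e2, hH2, hH1]
    have hc : ((N : ℝ) + 1) ≠ 0 := by positivity
    have hc2 : ((2 * N : ℕ) : ℝ) + 1 ≠ 0 := by positivity
    have hc3 : ((2 * N + 1 : ℕ) : ℝ) + 1 ≠ 0 := by positivity
    push_cast at *
    field_simp
    ring

lemma tendsto_even_odd {f : ℕ → ℝ} {a : ℝ}
    (he : Tendsto (fun n => f (2 * n)) atTop (nhds a))
    (ho : Tendsto (fun n => f (2 * n + 1)) atTop (nhds a)) :
    Tendsto f atTop (nhds a) := by
  rw [Metric.tendsto_atTop] at he ho ⊢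
  intro ε hε
  obtain ⟨N1, h1⟩ := he ε hε
  obtain ⟨N2, h2⟩ := ho ε hε
  refine ⟨2 * N1 + 2 * N2 + 2, fun n hn => ?_⟩
  rcases Nat.even_or_odd n with ⟨m, hm⟩ | ⟨m, hm⟩
  · have : n = 2 * m := by omega
    rw [this]; exact h1 m (by omega)
  · have : n = 2 * m + 1 := by omega
    rw [this]; exact h2 m (by omega)

open Real in
lemma La_tendsto : Tendsto (fun N => La 1 N) atTop (nhds (Real.log 2)) := by
  have hmul : Tendsto (fun N : ℕ => 2 * N) atTop atTop :=
    tendsto_atTop_mono (fun n => Nat.le_mul_of_pos_left n (by norm_num)) tendsto_id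
  have hE : Tendsto (fun N => La 1 (2 * N)) atTop (nhds (Real.log 2)) := by
    have h1 : Tendsto (fun N : ℕ => ((harmonic (2 * N) : ℝ) - Real.log (2 * N)) -
        ((harmonic N : ℝ) - Real.log N) + Real.log 2) atTop (nhds (Real.log 2)) := by
      have hA := tendsto_harmonic_sub_log.comp hmul
      have hB := tendsto_harmonic_sub_log
      have := (hA.sub hB).add (tendsto_const_nhds (x := Real.log 2))
      simpa using this
    apply h1.congr'
    filter_upwards [eventually_ge_atTop 1] with N hN
    have hN0 : (N : ℝ) ≠ 0 := by positivity
    have : Real.log (2 * (N : ℝ)) = Real.log 2 + Real.log N :=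
      Real.log_mul two_ne_zero hN0
    rw [La_even, H_eq_harmonic, H_eq_harmonic, this]
    ring
  have hO : Tendsto (fun N => La 1 (2 * N + 1)) atTop (nhds (Real.log 2)) := by
    have h0 : Tendsto (fun N : ℕ => 1 / (((2 * N : ℕ) : ℝ) + 1)) atTop (nhds 0) :=
      tendsto_one_div_add_atTop_nhds_zero_nat.comp hmul
    have := hE.add h0
    rw [add_zero] at this
    apply this.congr
    intro N
    rw [La_succ]
    have e1 : (-1 : ℝ) ^ (2 * N) = 1 := Even.neg_one_pow ⟨N, by ring⟩
    rw [e1]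
  exact tendsto_even_odd hE hO

lemma boundary_tendsto (k : ℕ) :
    Tendsto (fun N => (-1 : ℝ) ^ (N + 1) * La 1 N / ((N : ℝ) + 1 + k)) atTop (nhds 0) := by
  have h2 : Tendsto (fun N : ℕ => (-1 : ℝ) ^ (N + 1) / ((N : ℝ) + 1 + k)) atTop (nhds 0) := by
    apply squeeze_zero_norm (a := fun N : ℕ => 1 / ((N : ℝ) + 1))
    · intro N
      rw [norm_div, norm_pow, norm_neg, norm_one, one_pow]
      have h1 : (0 : ℝ) < (N : ℝ) + 1 := by positivity
      have h3 : ((N : ℝ) + 1) ≤ (N : ℝ) + 1 + k := by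
        have := Nat.cast_nonneg (α := ℝ) k; linarith
      rw [Real.norm_eq_abs, abs_of_pos (by positivity)]
      exact one_div_le_one_div_of_le h1 h3
    · exact tendsto_one_div_add_atTop_nhds_zero_nat
  have := La_tendsto.mul h2
  rw [mul_zero] at this
  apply this.congr
  intro N
  ring

lemma G_identity (k N : ℕ) (hk : 0 < k) :
    ∑ n ∈ Finset.range N, 1 / (((n : ℝ) + 1) * ((n : ℝ) + 1 + k)) =
      (1 / k) * (H k - ∑ j ∈ Finset.range k, 1 / ((N : ℝ) + (j : ℝ) + 1)) := by
  have hk0 : (k : ℝ) ≠ 0 := by positivity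
  induction N with
  | zero =>
    rw [H_range]
    simp
  | succ N ih =>
    rw [Finset.sum_range_succ, ih]
    have htel : ∑ j ∈ Finset.range k,
        (1 / ((N : ℝ) + (j : ℝ) + 1) - 1 / ((N : ℝ) + ((j : ℝ) + 1) + 1)) =
        1 / ((N : ℝ) + 1) - 1 / ((N : ℝ) + (k : ℝ) + 1) := by
      have := Finset.sum_range_sub' (f := fun j : ℕ => 1 / ((N : ℝ) + (j : ℝ) + 1)) k
      push_cast at this
      convert this using 2 <;> push_cast <;> ring_nf
    have hsplit : ∑ j ∈ Finset.range k, 1 / (((N + 1 : ℕ) : ℝ) + (j : ℝ) + 1) =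
        ∑ j ∈ Finset.range k, 1 / ((N : ℝ) + ((j : ℝ) + 1) + 1) := by
      apply Finset.sum_congr rfl
      intro j _
      push_cast
      ring_nf
    rw [hsplit]
    have hNc : ((N : ℝ) + 1) ≠ 0 := by positivity
    have hNk : ((N : ℝ) + 1 + k) ≠ 0 := by positivity
    have : ∑ j ∈ Finset.range k, 1 / ((N : ℝ) + ((j : ℝ) + 1) + 1) =
        ∑ j ∈ Finset.range k, 1 / ((N : ℝ) + (j : ℝ) + 1) -
          (1 / ((N : ℝ) + 1) - 1 / ((N : ℝ) + (k : ℝ) + 1)) := by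
      rw [← htel, Finset.sum_sub_distrib]
      ring
    rw [this]
    push_cast
    have h1 : ((N : ℝ) + (k : ℝ) + 1) ≠ 0 := by positivity
    field_simp
    ring

lemma tail_tendsto (k : ℕ) :
    Tendsto (fun N : ℕ => ∑ j ∈ Finset.range k, 1 / ((N : ℝ) + (j : ℝ) + 1)) atTop (nhds 0) := by
  have : (0 : ℝ) = ∑ j ∈ Finset.range k, (0 : ℝ) := by simp
  rw [this]
  apply tendsto_finset_sum
  intro j _
  apply squeeze_zero_norm (a := fun N : ℕ => 1 / ((N : ℝ) + 1))
  · intro N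
    have h1 : (0 : ℝ) < (N : ℝ) + 1 := by positivity
    rw [Real.norm_eq_abs, abs_of_pos (by positivity)]
    have hj := Nat.cast_nonneg (α := ℝ) j
    exact one_div_le_one_div_of_le h1 (by linarith)
  · exact tendsto_one_div_add_atTop_nhds_zero_nat

lemma G_tendsto (k : ℕ) (hk : 0 < k) :
    Tendsto (fun N => ∑ n ∈ Finset.range N, 1 / (((n : ℝ) + 1) * ((n : ℝ) + 1 + k))) atTop
      (nhds (H k / k)) := by
  have h := (tendsto_const_nhds (x := H k)).sub (tail_tendsto k)
  rw [sub_zero] at h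
  have h2 := (tendsto_const_nhds (x := (1 : ℝ) / k)).mul h
  have : (1 : ℝ) / k * H k = H k / k := by ring
  rw [this] at h2
  apply h2.congr
  intro N
  rw [G_identity k N hk]

open Real in
lemma F0_tendsto :
    Tendsto (fun N => ∑ n ∈ Finset.range N, (-1 : ℝ) ^ n * La 1 (n + 1) / ((n : ℝ) + 1)) atTop
      (nhds (((Real.log 2) ^ 2 + π ^ 2 / 6) / 2)) := by
  have h1 := ((La_tendsto.mul La_tendsto).add basel_tendsto).div_const 2
  have : Real.log 2 * Real.log 2 = (Real.log 2) ^ 2 := by ring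
  rw [this] at h1
  apply h1.congr
  intro N
  rw [sq_identity, sq]

noncomputable def Rv (k : ℕ) : ℝ :=
  (-1 : ℝ) ^ (k - 1) *
    ((Real.pi ^ 2 / 6 - (Real.log 2) ^ 2) / 2 -
      ∑ i ∈ Finset.Icc 1 (k - 1), (-1 : ℝ) ^ (i - 1) * H i / i)

lemma Rv_succ (k : ℕ) (hk : 0 < k) : Rv (k + 1) = H k / k - Rv k := by
  obtain ⟨j, rfl⟩ : ∃ j, k = j + 1 := ⟨k - 1, by omega⟩
  rw [Rv, Rv]
  have h1 : j + 1 + 1 - 1 = j + 1 := by omega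
  have h2 : j + 1 - 1 = j := by omega
  rw [h1, h2]
  rw [Finset.sum_Icc_succ_top (by omega : 1 ≤ j + 1)]
  rw [h2, pow_succ]
  rcases Nat.even_or_odd j with h | h
  · rw [h.neg_one_pow]; push_cast; ring
  · rw [h.neg_one_pow]; push_cast; ring

theorem stmt17 (k : ℕ) (hk : 0 < k) :
    Tendsto (fun N => ∑ n ∈ Finset.range N, (-1 : ℝ) ^ n * La 1 (n + 1) / ((n : ℝ) + 1 + k))
      atTop
      (nhds ((-1 : ℝ) ^ (k - 1) *
        ((Real.pi ^ 2 / 6 - (Real.log 2) ^ 2) / 2 -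
          ∑ i ∈ Finset.Icc 1 (k - 1), (-1 : ℝ) ^ (i - 1) * H i / i))) := by
  have main : ∀ k : ℕ, 0 < k →
      Tendsto (fun N => ∑ n ∈ Finset.range N, (-1 : ℝ) ^ n * La 1 (n + 1) / ((n : ℝ) + 1 + k))
        atTop (nhds (Rv k)) := by
    intro k hk
    have hk' : 1 ≤ k := hk
    clear hk
    induction k, hk' using Nat.le_induction with
    | base =>
      -- use recursion at k = 0
      have key : ∀ N, (∑ n ∈ Finset.range N, (-1 : ℝ) ^ n * La 1 (n + 1) / ((n : ℝ) + 1 + (1 : ℕ))) =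
          ((∑ n ∈ Finset.range N, 1 / (((n : ℝ) + 1) * ((n : ℝ) + 1 + (0 : ℕ)))) +
            (-1 : ℝ) ^ (N + 1) * La 1 N / ((N : ℝ) + 1 + (0 : ℕ))) -
          ∑ n ∈ Finset.range N, (-1 : ℝ) ^ n * La 1 (n + 1) / ((n : ℝ) + 1 + (0 : ℕ)) := by
        intro N
        have h := recursion 0 N
        push_cast at h ⊢
        linarith [h]
      have hQ : Tendsto (fun N => ∑ n ∈ Finset.range N,
          1 / (((n : ℝ) + 1) * ((n : ℝ) + 1 + (0 : ℕ)))) atTop (nhds (Real.pi ^ 2 / 6)) := by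
        apply basel_tendsto.congr
        intro N
        apply Finset.sum_congr rfl
        intro n _
        push_cast
        rw [add_zero, sq]
      have hF0 : Tendsto (fun N => ∑ n ∈ Finset.range N,
          (-1 : ℝ) ^ n * La 1 (n + 1) / ((n : ℝ) + 1 + (0 : ℕ))) atTop
          (nhds (((Real.log 2) ^ 2 + Real.pi ^ 2 / 6) / 2)) := by
        apply F0_tendsto.congr
        intro N
        apply Finset.sum_congr rfl
        intro n _
        push_cast
        rw [add_zero]
      have hb := boundary_tendsto 0
      have := (hQ.add hb).sub hF0
      rw [add_zero] at this
      have heq : Real.pi ^ 2 / 6 - ((Real.log 2) ^ 2 + Real.pi ^ 2 / 6) / 2 = Rv 1 := by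
        rw [Rv]
        norm_num
        ring
      rw [heq] at this
      exact this.congr (fun N => (key N).symm)
    | succ k hk1 ih =>
      have key : ∀ N, (∑ n ∈ Finset.range N,
            (-1 : ℝ) ^ n * La 1 (n + 1) / ((n : ℝ) + 1 + ((k + 1 : ℕ) : ℝ))) =
          ((∑ n ∈ Finset.range N, 1 / (((n : ℝ) + 1) * ((n : ℝ) + 1 + k))) +
            (-1 : ℝ) ^ (N + 1) * La 1 N / ((N : ℝ) + 1 + k)) -
          ∑ n ∈ Finset.range N, (-1 : ℝ) ^ n * La 1 (n + 1) / ((n : ℝ) + 1 + k) := by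
        intro N
        have h := recursion k N
        push_cast at h ⊢
        linarith [h]
      have hG := G_tendsto k (by omega)
      have hb := boundary_tendsto k
      have := (hG.add hb).sub ih
      rw [add_zero] at this
      rw [← Rv_succ k (by omega)] at this
      exact this.congr (fun N => (key N).symm)
  exact main k hk
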